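/- For the xy-model Hamiltonian H on the torus (Fin ν → ZMod L) with on-site potential u : Λ → ℝ satisfying u x ≥ γ for all x, for some γ > 0: every eigenvalue λ of H satisfies λ = 0 or λ ≥ γ, and the kernel of H is the one-dimensional span of ψ₀, where ψ₀(σ) = 1 if σ is the all-zero (all-spin-down) configuration and ψ₀(σ) = 0 otherwise. (The xy-model has a unique ground state with spectral gap at least γ.) -/

import Mathlib

/-- Two sites of the discrete torus `Fin ν → ZMod L` are nearest neighbors if they differ by
`±1` in exactly one coordinate. -/
def IsNearestNeighbor {ν L : ℕ} (x y : Fin ν → ZMod L) : Prop :=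
  ∃ i : Fin ν, y = Function.update x i (x i + 1) ∨ y = Function.update x i (x i - 1)

/-- `τ` is obtained from `σ` by exchanging the distinct values `σ x ≠ σ y` at a
nearest-neighbor pair `(x, y)`. -/
def IsExchange {ν L : ℕ} (σ τ : (Fin ν → ZMod L) → Fin 2) : Prop :=
  ∃ x y : Fin ν → ZMod L, IsNearestNeighbor x y ∧ σ x ≠ σ y ∧
    τ = Function.update (Function.update σ x (σ y)) y (σ x)

open Classical in
/-- The xy-model Hamiltonian on the torus `Fin ν → ZMod L` with on-site potential `u`:
diagonal entry `Σ_{x : σ x = 1} (u x + 2ν)`, entry `-1` between configurations related by a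
nearest-neighbor exchange of distinct spins, and `0` otherwise. -/
noncomputable def xyHam (ν L : ℕ) [NeZero L] (u : (Fin ν → ZMod L) → ℝ) :
    Matrix ((Fin ν → ZMod L) → Fin 2) ((Fin ν → ZMod L) → Fin 2) ℂ :=
  fun σ τ =>
    if σ = τ then
      ((∑ x : Fin ν → ZMod L, if σ x = 1 then u x + 2 * ν else 0 : ℝ) : ℂ)
    else if IsExchange σ τ then -1 else 0

open Classical in
/-- The all-spin-down vector: `ψ₀(σ) = 1` exactly when `σ` is the all-zero configuration. -/
noncomputable def groundVec (ν L : ℕ) [NeZero L] :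
    EuclideanSpace ℂ ((Fin ν → ZMod L) → Fin 2) :=
  WithLp.toLp 2 (fun σ => if σ = fun _ => 0 then 1 else 0)

open Finset

lemma swap_comm' {α β : Type*} [DecidableEq α] (σ : α → β) {x y : α} (h : x ≠ y) :
    Function.update (Function.update σ x (σ y)) y (σ x)
      = Function.update (Function.update σ y (σ x)) x (σ y) := by
  funext s
  by_cases h1 : s = x <;> by_cases h2 : s = y <;>
    simp_all [Function.update_apply]

lemma exchange_symm {ν L : ℕ} {σ τ : (Fin ν → ZMod L) → Fin 2}
    (h : IsExchange σ τ) : IsExchange τ σ := by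
  obtain ⟨x, y, hnn, hne, rfl⟩ := h
  have hxy : x ≠ y := fun e => hne (by rw [e])
  refine ⟨x, y, hnn, ?_, ?_⟩
  · simpa [Function.update_apply, hxy, hxy.symm] using hne.symm
  · funext s
    by_cases h1 : s = x <;> by_cases h2 : s = y <;>
      simp_all [Function.update_apply]

lemma exchange_ne {ν L : ℕ} {σ τ : (Fin ν → ZMod L) → Fin 2}
    (h : IsExchange σ τ) : σ ≠ τ := by
  obtain ⟨x, y, hnn, hne, rfl⟩ := h
  have hxy : x ≠ y := fun e => hne (by rw [e])
  intro hc
  have := congrFun hc x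
  simp [Function.update_apply, hxy, hxy.symm] at this
  exact hne this


lemma fin2_cases {a b : Fin 2} (h : a ≠ b) : a = 1 ∨ b = 1 := by
  revert h; revert a b; decide

open Classical in
lemma card_exchange {ν L : ℕ} [NeZero L] (σ : (Fin ν → ZMod L) → Fin 2) :
    (univ.filter fun τ => IsExchange σ τ).card
      ≤ (univ.filter fun x => σ x = 1).card * (ν * 2) := by
  classical
  have := Finset.card_le_card_of_surjOn
    (s := (univ.filter fun x : Fin ν → ZMod L => σ x = 1) ×ˢ (univ : Finset (Fin ν × Bool)))
    (t := univ.filter fun τ => IsExchange σ τ)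
    (fun p => Function.update
        (Function.update σ p.1 (σ (Function.update p.1 p.2.1 (p.1 p.2.1 + if p.2.2 then 1 else -1))))
        (Function.update p.1 p.2.1 (p.1 p.2.1 + if p.2.2 then 1 else -1)) (σ p.1))
    ?_
  · simpa [Finset.card_product, mul_comm] using this
  · rintro τ hτ
    simp only [coe_filter, Set.mem_setOf_eq, mem_univ, true_and] at hτ
    obtain ⟨x, y, ⟨i, hi⟩, hne, rfl⟩ := hτ
    have hxy : x ≠ y := fun e => hne (by rw [e])
    rcases fin2_cases hne with h1 | h1
    · rcases hi with hi | hi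
      · exact ⟨(x, i, true), by simp [h1], by
          show Function.update (Function.update σ x (σ (Function.update x i (x i + 1))))
            (Function.update x i (x i + 1)) (σ x) = _
          rw [← hi]⟩
      · exact ⟨(x, i, false), by simp [h1], by
          show Function.update (Function.update σ x (σ (Function.update x i (x i + -1))))
            (Function.update x i (x i + -1)) (σ x) = _
          rw [show Function.update x i (x i + -1) = y from by rw [hi, sub_eq_add_neg]]⟩
    · rcases hi with hi | hi
      · have hx : Function.update y i (y i + -1) = x := by
          subst hi; funext j; by_cases hj : j = i <;> simp [Function.update_apply, hj]
        exact ⟨(y, i, false), by simp [h1], by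
          show Function.update (Function.update σ y (σ (Function.update y i (y i + -1))))
            (Function.update y i (y i + -1)) (σ y) = _
          rw [hx, ← swap_comm' σ hxy]⟩
      · have hx : Function.update y i (y i + 1) = x := by
          subst hi; funext j; by_cases hj : j = i <;> simp [Function.update_apply, hj]
        exact ⟨(y, i, true), by simp [h1], by
          show Function.update (Function.update σ y (σ (Function.update y i (y i + 1))))
            (Function.update y i (y i + 1)) (σ y) = _
          rw [hx, ← swap_comm' σ hxy]⟩


open Classical in
lemma xyHam_split {ν L : ℕ} [NeZero L] (u : (Fin ν → ZMod L) → ℝ)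
    (σ τ : (Fin ν → ZMod L) → Fin 2) :
    xyHam ν L u σ τ =
      (if σ = τ then ((∑ x : Fin ν → ZMod L, if σ x = 1 then u x + 2 * ν else 0 : ℝ) : ℂ) else 0)
        + (if IsExchange σ τ then -1 else 0) := by
  by_cases h : σ = τ
  · subst h
    have hns : ¬ IsExchange σ σ := fun hc => exchange_ne hc rfl
    simp [xyHam, hns]
  · simp [xyHam, h]

open Classical in
lemma key_ineq {ν L : ℕ} [NeZero L] (u : (Fin ν → ZMod L) → ℝ) (γ : ℝ)
    (hγ : 0 < γ) (hu : ∀ x, γ ≤ u x)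
    (ψ : ((Fin ν → ZMod L) → Fin 2) → ℂ) :
    γ * ∑ σ ∈ univ.filter (fun σ : (Fin ν → ZMod L) → Fin 2 => σ ≠ fun _ => 0),
        Complex.normSq (ψ σ)
      ≤ (∑ σ, (starRingEnd ℂ) (ψ σ) * (xyHam ν L u).mulVec ψ σ).re := by
  classical
  set n : ((Fin ν → ZMod L) → Fin 2) → ℕ :=
    fun σ => (univ.filter fun x => σ x = 1).card with hn
  have hQ : (∑ σ, (starRingEnd ℂ) (ψ σ) * (xyHam ν L u).mulVec ψ σ).re
      = (∑ σ, (∑ x : Fin ν → ZMod L, if σ x = 1 then u x + 2 * ν else 0 : ℝ)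
            * Complex.normSq (ψ σ))
        - (∑ σ, ∑ τ, if IsExchange σ τ then ((starRingEnd ℂ) (ψ σ) * ψ τ).re else 0) := by
    have key : ∀ σ, (starRingEnd ℂ) (ψ σ) * (xyHam ν L u).mulVec ψ σ
        = ((∑ x : Fin ν → ZMod L, if σ x = 1 then u x + 2 * ν else 0 : ℝ) : ℂ)
            * ((starRingEnd ℂ) (ψ σ) * ψ σ)
          - ∑ τ, (if IsExchange σ τ then ((starRingEnd ℂ) (ψ σ) * ψ τ) else 0) := by
      intro σ
      rw [Matrix.mulVec, dotProduct]
      rw [Finset.mul_sum]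
      have hterm : ∀ τ, (starRingEnd ℂ) (ψ σ) * (xyHam ν L u σ τ * ψ τ)
          = (if σ = τ then ((∑ x : Fin ν → ZMod L, if σ x = 1 then u x + 2 * ν else 0 : ℝ) : ℂ)
              * ((starRingEnd ℂ) (ψ σ) * ψ τ) else 0)
            - (if IsExchange σ τ then ((starRingEnd ℂ) (ψ σ) * ψ τ) else 0) := by
        intro τ
        rw [xyHam_split]
        have hns : σ = τ → ¬ IsExchange σ τ := fun h hc => exchange_ne hc h
        by_cases h1 : σ = τ
        · subst h1
          simp only [if_neg (hns rfl), if_true, eq_self_iff_true, add_zero]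
          ring
        · by_cases h2 : IsExchange σ τ <;> simp [h1, h2] <;> ring
      rw [Finset.sum_congr rfl fun τ _ => hterm τ, Finset.sum_sub_distrib,
        Finset.sum_ite_eq univ σ
          (fun τ => ((∑ x : Fin ν → ZMod L, if σ x = 1 then u x + 2 * ν else 0 : ℝ) : ℂ)
              * ((starRingEnd ℂ) (ψ σ) * ψ τ)), if_pos (mem_univ σ)]
    rw [Finset.sum_congr rfl fun σ _ => key σ, Finset.sum_sub_distrib]
    rw [Complex.sub_re]
    congr 1
    · rw [Complex.re_sum]
      refine Finset.sum_congr rfl fun σ _ => ?_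
      rw [Complex.mul_re]
      have h1 : ((starRingEnd ℂ) (ψ σ) * ψ σ) = (Complex.normSq (ψ σ) : ℂ) := by
        rw [Complex.normSq_eq_conj_mul_self]
      rw [h1]
      simp
    · rw [Complex.re_sum]
      refine Finset.sum_congr rfl fun σ _ => ?_
      rw [Complex.re_sum]
      refine Finset.sum_congr rfl fun τ _ => ?_
      split <;> simp
  rw [hQ]
  have hop : (∑ σ, ∑ τ, if IsExchange σ τ then ((starRingEnd ℂ) (ψ σ) * ψ τ).re else 0)
      ≤ ∑ σ, ((n σ : ℝ) * (ν * 2)) * Complex.normSq (ψ σ) := by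
    have step1 : ∀ σ τ : (Fin ν → ZMod L) → Fin 2,
        (if IsExchange σ τ then ((starRingEnd ℂ) (ψ σ) * ψ τ).re else 0)
        ≤ (if IsExchange σ τ then
            Complex.normSq (ψ σ) / 2 + Complex.normSq (ψ τ) / 2 else 0) := by
      intro σ τ
      split
      · calc ((starRingEnd ℂ) (ψ σ) * ψ τ).re ≤ ‖(starRingEnd ℂ) (ψ σ) * ψ τ‖ :=
              Complex.re_le_norm _
          _ = ‖ψ σ‖ * ‖ψ τ‖ := by
              rw [norm_mul, Complex.norm_conj]
          _ ≤ Complex.normSq (ψ σ) / 2 + Complex.normSq (ψ τ) / 2 := by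
              rw [← Complex.sq_norm, ← Complex.sq_norm]
              nlinarith [norm_nonneg (ψ σ), norm_nonneg (ψ τ),
                sq_nonneg (‖ψ σ‖ - ‖ψ τ‖)]
      · exact le_refl 0
    have symm_eq : (∑ σ, ∑ τ, if IsExchange σ τ then Complex.normSq (ψ τ) / 2 else 0)
        = ∑ σ, ∑ τ, if IsExchange σ τ then Complex.normSq (ψ σ) / 2 else 0 := by
      rw [Finset.sum_comm]
      refine Finset.sum_congr rfl fun σ _ => Finset.sum_congr rfl fun τ _ => ?_
      by_cases h : IsExchange σ τ
      · rw [if_pos (exchange_symm h), if_pos h]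
      · rw [if_neg (fun hc => h (exchange_symm hc)), if_neg h]
    have count : ∀ σ : (Fin ν → ZMod L) → Fin 2,
        (∑ τ, if IsExchange σ τ then Complex.normSq (ψ σ) else 0)
          ≤ ((n σ : ℝ) * (ν * 2)) * Complex.normSq (ψ σ) := by
      intro σ
      rw [← Finset.sum_filter, Finset.sum_const, nsmul_eq_mul]
      have h1 := card_exchange σ
      have h2 : (0:ℝ) ≤ Complex.normSq (ψ σ) := Complex.normSq_nonneg _
      have h3 : ((univ.filter fun τ => IsExchange σ τ).card : ℝ) ≤ (n σ : ℝ) * (ν * 2) := by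
        rw [hn]
        exact_mod_cast h1
      nlinarith
    calc (∑ σ, ∑ τ, if IsExchange σ τ then ((starRingEnd ℂ) (ψ σ) * ψ τ).re else 0)
        ≤ ∑ σ, ∑ τ, if IsExchange σ τ then
            Complex.normSq (ψ σ) / 2 + Complex.normSq (ψ τ) / 2 else 0 :=
          Finset.sum_le_sum fun σ _ => Finset.sum_le_sum fun τ _ => step1 σ τ
      _ = ∑ σ, ∑ τ, if IsExchange σ τ then Complex.normSq (ψ σ) else 0 := by
          have esplit : ∀ σ τ : (Fin ν → ZMod L) → Fin 2,
              (if IsExchange σ τ then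
                  Complex.normSq (ψ σ) / 2 + Complex.normSq (ψ τ) / 2 else 0)
              = (if IsExchange σ τ then Complex.normSq (ψ σ) / 2 else 0)
                + (if IsExchange σ τ then Complex.normSq (ψ τ) / 2 else 0) := by
            intro σ τ; split <;> simp
          simp_rw [esplit]
          rw [Finset.sum_congr rfl fun σ _ => Finset.sum_add_distrib, Finset.sum_add_distrib,
            symm_eq]
          rw [← Finset.sum_add_distrib]
          refine Finset.sum_congr rfl fun σ _ => ?_
          rw [← Finset.sum_add_distrib]
          refine Finset.sum_congr rfl fun τ _ => ?_
          split <;> ring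
      _ ≤ ∑ σ, ((n σ : ℝ) * (ν * 2)) * Complex.normSq (ψ σ) :=
          Finset.sum_le_sum fun σ _ => count σ
  have diag : ∀ σ : (Fin ν → ZMod L) → Fin 2,
      ((n σ : ℝ) * (γ + 2 * ν)) ≤ ∑ x : Fin ν → ZMod L, if σ x = 1 then u x + 2 * ν else 0 := by
    intro σ
    rw [← Finset.sum_filter]
    calc ((n σ : ℝ) * (γ + 2 * ν)) = ∑ _x ∈ univ.filter fun x => σ x = 1, (γ + 2 * (ν:ℝ)) := by
          rw [Finset.sum_const, nsmul_eq_mul, hn]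
      _ ≤ ∑ x ∈ univ.filter fun x => σ x = 1, (u x + 2 * ν) :=
          Finset.sum_le_sum fun x _ => by have := hu x; linarith
  have none : ∀ σ ∈ univ.filter (fun σ : (Fin ν → ZMod L) → Fin 2 => σ ≠ fun _ => 0),
      1 ≤ n σ := by
    intro σ hσ
    simp only [mem_filter, mem_univ, true_and] at hσ
    obtain ⟨x, hx⟩ := Function.ne_iff.mp hσ
    have hx1 : σ x = 1 := by omega
    rw [hn]
    exact Finset.card_pos.mpr ⟨x, by simp [hx1]⟩
  have main : γ * ∑ σ ∈ univ.filter (fun σ : (Fin ν → ZMod L) → Fin 2 => σ ≠ fun _ => 0),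
        Complex.normSq (ψ σ)
      ≤ ∑ σ, ((n σ : ℝ) * γ) * Complex.normSq (ψ σ) := by
    rw [Finset.mul_sum]
    calc (∑ σ ∈ univ.filter (fun σ : (Fin ν → ZMod L) → Fin 2 => σ ≠ fun _ => 0),
          γ * Complex.normSq (ψ σ))
        ≤ ∑ σ ∈ univ.filter (fun σ : (Fin ν → ZMod L) → Fin 2 => σ ≠ fun _ => 0),
            ((n σ : ℝ) * γ) * Complex.normSq (ψ σ) := by
          refine Finset.sum_le_sum fun σ hσ => ?_
          have h1 : (1:ℝ) ≤ (n σ : ℝ) := by exact_mod_cast none σ hσ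
          nlinarith [mul_nonneg (mul_nonneg (sub_nonneg.mpr h1) hγ.le)
            (Complex.normSq_nonneg (ψ σ))]
      _ ≤ ∑ σ, ((n σ : ℝ) * γ) * Complex.normSq (ψ σ) := by
          refine Finset.sum_le_sum_of_subset_of_nonneg (Finset.filter_subset _ _) ?_
          intro σ _ _
          exact mul_nonneg (mul_nonneg (Nat.cast_nonneg _) hγ.le) (Complex.normSq_nonneg _)
  have combine : ∀ σ : (Fin ν → ZMod L) → Fin 2,
      ((n σ : ℝ) * γ) * Complex.normSq (ψ σ)
        ≤ (∑ x : Fin ν → ZMod L, if σ x = 1 then u x + 2 * ν else 0) * Complex.normSq (ψ σ)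
          - ((n σ : ℝ) * (ν * 2)) * Complex.normSq (ψ σ) := by
    intro σ
    have h1 := diag σ
    nlinarith [Complex.normSq_nonneg (ψ σ)]
  calc γ * ∑ σ ∈ univ.filter (fun σ : (Fin ν → ZMod L) → Fin 2 => σ ≠ fun _ => 0),
        Complex.normSq (ψ σ)
      ≤ ∑ σ, ((n σ : ℝ) * γ) * Complex.normSq (ψ σ) := main
    _ ≤ ∑ σ, ((∑ x : Fin ν → ZMod L, if σ x = 1 then u x + 2 * ν else 0) * Complex.normSq (ψ σ)
          - ((n σ : ℝ) * (ν * 2)) * Complex.normSq (ψ σ)) :=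
        Finset.sum_le_sum fun σ _ => combine σ
    _ = (∑ σ, (∑ x : Fin ν → ZMod L, if σ x = 1 then u x + 2 * ν else 0) * Complex.normSq (ψ σ))
          - ∑ σ, ((n σ : ℝ) * (ν * 2)) * Complex.normSq (ψ σ) := Finset.sum_sub_distrib _ _
    _ ≤ _ := by linarith [hop]


lemma exchange_not_ground {ν L : ℕ} {τ : (Fin ν → ZMod L) → Fin 2} :
    ¬ IsExchange (fun _ => (0 : Fin 2)) τ := by
  rintro ⟨x, y, -, hne, -⟩
  exact hne rfl

lemma ham_row {ν L : ℕ} [NeZero L] (u : (Fin ν → ZMod L) → ℝ)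
    (τ : (Fin ν → ZMod L) → Fin 2) :
    xyHam ν L u (fun _ => 0) τ = 0 := by
  classical
  unfold xyHam
  by_cases h : (fun _ : Fin ν → ZMod L => (0 : Fin 2)) = τ
  · rw [if_pos h]
    norm_num
  · rw [if_neg h, if_neg exchange_not_ground]

lemma ham_col {ν L : ℕ} [NeZero L] (u : (Fin ν → ZMod L) → ℝ)
    (σ : (Fin ν → ZMod L) → Fin 2) :
    xyHam ν L u σ (fun _ => 0) = 0 := by
  classical
  unfold xyHam
  by_cases h : σ = fun _ => 0
  · rw [if_pos h]
    subst h
    norm_num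
  · rw [if_neg h, if_neg (fun hc => exchange_not_ground (exchange_symm hc))]

lemma mulVec_ground {ν L : ℕ} [NeZero L] (u : (Fin ν → ZMod L) → ℝ) :
    (xyHam ν L u).mulVec (groundVec ν L) = 0 := by
  classical
  funext σ
  rw [Matrix.mulVec, dotProduct]
  show (∑ τ, xyHam ν L u σ τ * if τ = fun _ => 0 then 1 else 0) = 0
  rw [Finset.sum_congr rfl fun τ _ => (by split <;> simp_all [ham_col] :
    xyHam ν L u σ τ * (if τ = fun _ => 0 then 1 else 0) = 0)]
  simp

/-- For on-site potential bounded below by `γ > 0`, every eigenvalue of the xy-model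
Hamiltonian is `0` or at least `γ`, and its kernel is the (one-dimensional) span of the
all-spin-down vector `ψ₀`: unique ground state with spectral gap at least `γ`. -/
theorem xy_model_unique_gapped_ground_state
    (ν L : ℕ) (hν : 1 ≤ ν) [NeZero L] (hL : 3 ≤ L)
    (u : (Fin ν → ZMod L) → ℝ) (γ : ℝ) (hγ : 0 < γ) (hu : ∀ x, γ ≤ u x) :
    (∀ lam : ℝ,
        Module.End.HasEigenvalue (Matrix.toEuclideanLin (xyHam ν L u)) (lam : ℂ) →
        lam = 0 ∨ γ ≤ lam) ∧
      LinearMap.ker (Matrix.toEuclideanLin (xyHam ν L u)) =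
        Submodule.span ℂ {groundVec ν L} := by
  classical
  have happly : ∀ ψ : EuclideanSpace ℂ ((Fin ν → ZMod L) → Fin 2),
      Matrix.toEuclideanLin (xyHam ν L u) ψ = (xyHam ν L u).mulVec ψ := fun _ => rfl
  constructor
  · intro lam hlam
    by_cases hl : lam = 0
    · exact Or.inl hl
    right
    obtain ⟨ψ, hψ⟩ := hlam.exists_hasEigenvector
    have hEq : (xyHam ν L u).mulVec ψ = (lam : ℂ) • (ψ : ((Fin ν → ZMod L) → Fin 2) → ℂ) := by
      rw [← happly, hψ.apply_eq_smul]
      rfl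
    have hg0 : ψ (fun _ => 0) = 0 := by
      have h1 : (xyHam ν L u).mulVec ψ (fun _ => 0) = 0 := by
        rw [Matrix.mulVec, dotProduct]
        exact Finset.sum_eq_zero fun τ _ => by rw [ham_row, zero_mul]
      rw [hEq] at h1
      have : (lam : ℂ) * ψ (fun _ => 0) = 0 := h1
      rcases mul_eq_zero.mp this with h | h
      · exact absurd (by exact_mod_cast h) hl
      · exact h
    have hknorm := key_ineq (ν := ν) (L := L) u γ hγ hu ψ
    have hterm : ∀ σ : (Fin ν → ZMod L) → Fin 2,
        (starRingEnd ℂ) (ψ σ) * (xyHam ν L u).mulVec ψ σ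
          = (lam : ℂ) * ((Complex.normSq (ψ σ) : ℝ) : ℂ) := by
      intro σ
      rw [congrFun hEq σ]
      calc (starRingEnd ℂ) (ψ σ) * ((lam : ℂ) • ψ) σ
          = (lam : ℂ) * ((starRingEnd ℂ) (ψ σ) * ψ σ) := by
            show (starRingEnd ℂ) (ψ σ) * ((lam : ℂ) * ψ σ) = _
            ring
        _ = (lam : ℂ) * ((Complex.normSq (ψ σ) : ℝ) : ℂ) := by
            rw [← Complex.normSq_eq_conj_mul_self]
    have hsum : (∑ σ, (starRingEnd ℂ) (ψ σ) * (xyHam ν L u).mulVec ψ σ).re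
        = lam * ∑ σ, Complex.normSq (ψ σ) := by
      rw [Finset.sum_congr rfl fun σ _ => hterm σ, ← Finset.mul_sum, ← Complex.ofReal_sum,
        ← Complex.ofReal_mul]
      exact Complex.ofReal_re _
    have hfill : (∑ σ ∈ univ.filter (fun σ : (Fin ν → ZMod L) → Fin 2 => σ ≠ fun _ => 0),
          Complex.normSq (ψ σ)) = ∑ σ, Complex.normSq (ψ σ) := by
      rw [Finset.filter_ne']
      exact Finset.sum_erase _ (by rw [hg0]; simp)
    have hSpos : 0 < ∑ σ, Complex.normSq (ψ σ) := by
      obtain ⟨σ, hσ⟩ := Function.ne_iff.mp (fun h => hψ.right (WithLp.ofLp_injective 2 (by rw [h]; rfl)) :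
        (ψ : ((Fin ν → ZMod L) → Fin 2) → ℂ) ≠ fun _ => 0)
      have h1 : 0 < Complex.normSq (ψ σ) := by
        have := Complex.normSq_pos.mpr hσ
        exact this
      exact lt_of_lt_of_le h1 (Finset.single_le_sum
        (fun τ _ => Complex.normSq_nonneg (ψ τ)) (mem_univ σ))
    rw [hsum, hfill] at hknorm
    exact le_of_mul_le_mul_right hknorm hSpos
  · apply le_antisymm
    · intro ψ hψ
      have hEq : (xyHam ν L u).mulVec ψ = 0 := by
        rw [← happly]
        rw [LinearMap.mem_ker.mp hψ]
        rfl
      have hknorm := key_ineq (ν := ν) (L := L) u γ hγ hu ψ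
      rw [hEq] at hknorm
      simp only [Pi.zero_apply, mul_zero, Finset.sum_const_zero, Complex.zero_re] at hknorm
      have hzero : ∀ σ ∈ univ.filter (fun σ : (Fin ν → ZMod L) → Fin 2 => σ ≠ fun _ => 0),
          Complex.normSq (ψ σ) = 0 := by
        have hle : (∑ σ ∈ univ.filter (fun σ : (Fin ν → ZMod L) → Fin 2 => σ ≠ fun _ => 0),
            Complex.normSq (ψ σ)) ≤ 0 := by
          by_contra hc
          push_neg at hc
          nlinarith
        have heq0 : (∑ σ ∈ univ.filter (fun σ : (Fin ν → ZMod L) → Fin 2 => σ ≠ fun _ => 0),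
            Complex.normSq (ψ σ)) = 0 :=
          le_antisymm hle (Finset.sum_nonneg fun σ _ => Complex.normSq_nonneg _)
        exact (Finset.sum_eq_zero_iff_of_nonneg
          fun σ _ => Complex.normSq_nonneg (ψ σ)).mp heq0
      refine Submodule.mem_span_singleton.mpr ⟨ψ (fun _ => 0), ?_⟩
      apply WithLp.ofLp_injective 2
      funext σ
      show ψ (fun _ => 0) * (if σ = fun _ => 0 then 1 else 0) = ψ σ
      by_cases h : σ = fun _ => 0
      · rw [if_pos h, mul_one, h]
      · rw [if_neg h, mul_zero]
        have := hzero σ (by simp [h])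
        exact (Complex.normSq_eq_zero.mp this).symm
    · rw [Submodule.span_singleton_le_iff_mem]
      refine LinearMap.mem_ker.mpr ?_
      apply WithLp.ofLp_injective 2
      rw [happly, WithLp.ofLp_zero]
      exact mulVec_ground (ν := ν) (L := L) u
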